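/- arXiv:1411.0944 — 2 statements merged into one kernel-verified Lean document; each statement's English description precedes it below -/
import Mathlib

section
/- Let v be a uniform weighted game on N = {1,…,n} with weighted representation [q; w_1,…,w_n]. Then the raw Public Good index and the raw Deegan-Packel index satisfy local monotonicity on v: w_i ≥ w_j implies PGI^r_i(v) ≥ PGI^r_j(v) and DP^r_i(v) ≥ DP^r_j(v). -/
open scoped Classical

/-- A simple game on the player set `{1,…,n}` (modeled as `Fin n`):
a monotone map from coalitions to `{0,1}` (modeled as `Bool`) that is
`0` on the empty coalition and `1` on the grand coalition. -/
structure SimpleGame (n : ℕ) where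
  win : Finset (Fin n) → Bool
  win_empty : win ∅ = false
  win_univ : win Finset.univ = true
  win_mono : ∀ ⦃S T : Finset (Fin n)⦄, S ⊆ T → win S = true → win T = true

namespace SimpleGame

variable {n : ℕ}

/-- Player `i` dominates player `j`: `v((S ∪ {i}) \ {j}) ≥ v(S)` for every
coalition `S` with `j ∈ S` and `i ∉ S`. -/
def Dominates (v : SimpleGame n) (i j : Fin n) : Prop :=
  ∀ S : Finset (Fin n), j ∈ S → i ∉ S → v.win S ≤ v.win ((S ∪ {i}) \ {j})

/-- The game is complete if the dominance relation is a total preorder. -/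
def IsComplete (v : SimpleGame n) : Prop :=
  (∀ i, v.Dominates i i) ∧
  (∀ i j, v.Dominates i j ∨ v.Dominates j i) ∧
  (∀ i j k, v.Dominates i j → v.Dominates j k → v.Dominates i k)

/-- `S` is a minimal winning coalition: winning and every proper subset is losing. -/
def IsMWC (v : SimpleGame n) (S : Finset (Fin n)) : Prop :=
  v.win S = true ∧ ∀ T ⊂ S, v.win T = false

/-- `M_i`: the set of minimal winning coalitions containing player `i`. -/
noncomputable def Mset (v : SimpleGame n) (i : Fin n) : Finset (Finset (Fin n)) :=
  Finset.univ.filter fun S => v.IsMWC S ∧ i ∈ S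

/-- `M_i(l)`: minimal winning coalitions of cardinality `l` containing `i`. -/
noncomputable def Mlset (v : SimpleGame n) (i : Fin n) (l : ℕ) : Finset (Finset (Fin n)) :=
  (v.Mset i).filter fun S => S.card = l

/-- Raw Public Good index: `PGI^r_i(v) = |M_i|`. -/
noncomputable def PGI (v : SimpleGame n) (i : Fin n) : ℕ := (v.Mset i).card

/-- Raw Deegan-Packel index: `DP^r_i(v) = Σ_{S ∈ M_i} 1/|S|`. -/
noncomputable def DP (v : SimpleGame n) (i : Fin n) : ℝ :=
  ∑ S ∈ v.Mset i, (1 : ℝ) / (S.card : ℝ)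

/-- The game is uniform if all minimal winning coalitions have the same cardinality. -/
def IsUniform (v : SimpleGame n) : Prop :=
  ∀ S T, v.IsMWC S → v.IsMWC T → S.card = T.card

/-- `[q; w]` is a weighted representation of `v`. -/
def IsWeightedRep (v : SimpleGame n) (q : ℝ) (w : Fin n → ℝ) : Prop :=
  0 < q ∧ (∀ i, 0 ≤ w i) ∧ ∀ S : Finset (Fin n), v.win S = true ↔ q ≤ ∑ i ∈ S, w i

/-- The game is weighted. -/
def IsWeighted (v : SimpleGame n) : Prop := ∃ q w, v.IsWeightedRep q w

/-- `D_i`: coalitions decisive for player `i`. -/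
noncomputable def Dset (v : SimpleGame n) (i : Fin n) : Finset (Finset (Fin n)) :=
  Finset.univ.filter fun S => i ∈ S ∧ v.win S = true ∧ v.win (S.erase i) = false

/-- Raw Banzhaf index: `Bz^r_i(v) = |D_i|`. -/
noncomputable def Bz (v : SimpleGame n) (i : Fin n) : ℕ := (v.Dset i).card

/-- `S` is a shift-minimal winning coalition. -/
def IsSMWC (v : SimpleGame n) (S : Finset (Fin n)) : Prop :=
  v.IsMWC S ∧ ∀ i ∈ S, ∀ j ∉ S, v.Dominates i j → ¬ v.Dominates j i →
    v.win ((S \ {i}) ∪ {j}) = false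

/-- `𝒮_i`: the set of shift-minimal winning coalitions containing player `i`. -/
noncomputable def Sset (v : SimpleGame n) (i : Fin n) : Finset (Finset (Fin n)) :=
  Finset.univ.filter fun S => v.IsSMWC S ∧ i ∈ S

/-- Raw Shift index: `S^r_i(v) = |𝒮_i|`. -/
noncomputable def ShiftIdx (v : SimpleGame n) (i : Fin n) : ℕ := (v.Sset i).card

/-- The number of players for which the coalition `S` is decisive. -/
noncomputable def numDecisive (v : SimpleGame n) (S : Finset (Fin n)) : ℕ :=
  (Finset.univ.filter fun k => k ∈ S ∧ v.win S = true ∧ v.win (S.erase k) = false).card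

/-- Raw Johnston index: `Jo^r_i(v) = Σ_{S ∈ D_i} 1/#{decisive players of S}`. -/
noncomputable def Jo (v : SimpleGame n) (i : Fin n) : ℝ :=
  ∑ S ∈ v.Dset i, (1 : ℝ) / (v.numDecisive S : ℝ)

/-- `i` is a null player: it belongs to no minimal winning coalition. -/
def IsNull (v : SimpleGame n) (i : Fin n) : Prop := ∀ S, v.IsMWC S → i ∉ S

end SimpleGame

/-- A power index: assigns to every `n`-player simple game a vector in `ℝ^n`. -/
abbrev PowerIndex : Type := ∀ n : ℕ, SimpleGame n → Fin n → ℝ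

/-- A class of games (one set of games for every number of players). -/
abbrev GameClass : Type := ∀ n : ℕ, Set (SimpleGame n)

/-- Convex combination `P^α = Σ_h α_h P^h` of power indices. -/
noncomputable def convexComb {r : ℕ} (α : Fin r → ℝ) (P : Fin r → PowerIndex) : PowerIndex :=
  fun n v i => ∑ h, α h * P h n v i

/-- `Q` satisfies local monotonicity on the `n`-player games of `𝔊`. -/
def LMon (𝔊 : GameClass) (n : ℕ) (Q : PowerIndex) : Prop :=
  ∀ v ∈ 𝔊 n, ∀ i j : Fin n, v.Dominates i j → Q n v j ≤ Q n v i

/-- The cost of local monotonicity `c_𝒫(n,𝔊)`. -/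
noncomputable def costLM {r : ℕ} [NeZero r] (P : Fin r → PowerIndex) (n : ℕ)
    (𝔊 : GameClass) : ℝ :=
  sInf {β : ℝ | β ∈ Set.Icc (0 : ℝ) 1 ∧
    ∀ α ∈ stdSimplex ℝ (Fin r), β ≤ α 0 → LMon 𝔊 n (convexComb α P)}

/-- The raw Banzhaf index as a power index. -/
noncomputable def BzPI : PowerIndex := fun _ v i => (v.Bz i : ℝ)

/-- The raw Public Good index as a power index. -/
noncomputable def PGIPI : PowerIndex := fun _ v i => (v.PGI i : ℝ)

/-- The raw Shift index as a power index. -/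
noncomputable def ShiftPI : PowerIndex := fun _ v i => (v.ShiftIdx i : ℝ)

/-- The raw Johnston index as a power index. -/
noncomputable def JoPI : PowerIndex := fun _ v i => v.Jo i

/-- The raw Deegan-Packel index as a power index. -/
noncomputable def DPPI : PowerIndex := fun _ v i => v.DP i

/-- `𝔚`: the class of weighted games. -/
def WeightedClass : GameClass := fun _ => {v | v.IsWeighted}

/-- Every winning coalition contains a minimal winning coalition. -/
lemma SimpleGame.exists_mwc_subset {n : ℕ} (v : SimpleGame n) :
    ∀ S : Finset (Fin n), v.win S = true → ∃ T ⊆ S, v.IsMWC T := by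
  intro S
  induction S using Finset.strongInduction with
  | _ S ih =>
    intro hS
    by_cases h : ∀ T ⊂ S, v.win T = false
    · exact ⟨S, le_refl S, hS, h⟩
    · push_neg at h
      obtain ⟨T, hTS, hT⟩ := h
      obtain ⟨U, hUT, hU⟩ := ih T hTS (by simpa using hT)
      exact ⟨U, hUT.trans hTS.subset, hU⟩

/-- For a uniform weighted game with representation `[q; w]`,
the raw Public Good and Deegan-Packel indices satisfy local monotonicity:
`w i ≥ w j` implies `PGI i ≥ PGI j` and `DP i ≥ DP j`. -/
theorem pgi_dp_local_monotonicity_of_uniform_weighted {n : ℕ} (v : SimpleGame n)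
    (q : ℝ) (w : Fin n → ℝ) (hrep : v.IsWeightedRep q w) (huni : v.IsUniform)
    (i j : Fin n) (hw : w j ≤ w i) :
    v.PGI j ≤ v.PGI i ∧ v.DP j ≤ v.DP i := by
  rcases eq_or_ne i j with rfl | hij
  · exact ⟨le_refl _, le_refl _⟩
  obtain ⟨hq, hwpos, hwin⟩ := hrep
  -- the swap map
  set f : Finset (Fin n) → Finset (Fin n) :=
    fun S => if i ∈ S then S else insert i (S.erase j) with hf
  have hmem : ∀ S ∈ v.Mset j, f S ∈ v.Mset i := by
    intro S hS
    simp only [SimpleGame.Mset, Finset.mem_filter, Finset.mem_univ, true_and] at hS ⊢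
    obtain ⟨⟨hSwin, hSmin⟩, hjS⟩ := hS
    by_cases hiS : i ∈ S
    · simp only [hf, if_pos hiS]
      exact ⟨⟨hSwin, hSmin⟩, hiS⟩
    · simp only [hf, if_neg hiS]
      set T := insert i (S.erase j) with hT
      have hiNotErase : i ∉ S.erase j := fun h => hiS (Finset.mem_of_mem_erase h)
      have hcardT : T.card = S.card := by
        rw [hT, Finset.card_insert_of_notMem hiNotErase,
          Finset.card_erase_of_mem hjS]
        have : 0 < S.card := Finset.card_pos.mpr ⟨j, hjS⟩
        omega
      have hsum : ∑ k ∈ T, w k = w i + (∑ k ∈ S, w k - w j) := by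
        rw [hT, Finset.sum_insert hiNotErase]
        have := Finset.sum_erase_add S w hjS
        linarith
      have hTwin : v.win T = true := by
        rw [hwin]
        have hqS : q ≤ ∑ k ∈ S, w k := (hwin S).mp hSwin
        rw [hsum]; linarith
      refine ⟨⟨hTwin, ?_⟩, Finset.mem_insert_self _ _⟩
      intro U hUT
      by_contra hU
      have hUwin : v.win U = true := by
        cases h : v.win U with
        | false => exact absurd h hU
        | true => rfl
      obtain ⟨U', hU'U, hU'⟩ := v.exists_mwc_subset U hUwin
      have hcard : U'.card = S.card := huni U' S hU' ⟨hSwin, hSmin⟩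
      have h1 : U'.card ≤ U.card := Finset.card_le_card hU'U
      have h2 : U.card < T.card := Finset.card_lt_card hUT
      omega
  have hinj : Set.InjOn f (v.Mset j) := by
    intro S hS S' hS' heq
    simp only [SimpleGame.Mset, Finset.coe_filter, Set.mem_setOf_eq,
      Finset.mem_univ, true_and] at hS hS'
    have hjS := hS.2
    have hjS' := hS'.2
    by_cases hiS : i ∈ S <;> by_cases hiS' : i ∈ S' <;>
      simp only [hf, if_pos, if_neg, hiS, hiS', if_true, if_false] at heq
    · exact heq
    · exfalso
      have : j ∈ insert i (S'.erase j) := heq ▸ hjS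
      rcases Finset.mem_insert.mp this with h | h
      · exact hij h.symm
      · exact (Finset.notMem_erase j S') h
    · exfalso
      have : j ∈ insert i (S.erase j) := heq ▸ hjS'
      rcases Finset.mem_insert.mp this with h | h
      · exact hij h.symm
      · exact (Finset.notMem_erase j S) h
    · have h1 : S.erase j = S'.erase j := by
        have := congrArg (fun U => U.erase i) heq
        simpa [Finset.erase_insert_of_ne,
          Finset.erase_eq_of_notMem (fun h => hiS (Finset.mem_of_mem_erase h)),
          Finset.erase_eq_of_notMem (fun h => hiS' (Finset.mem_of_mem_erase h))]
          using this
      have := congrArg (fun U => insert j U) h1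
      simpa [Finset.insert_erase hjS, Finset.insert_erase hjS'] using this
  have hcardf : ∀ S ∈ v.Mset j, (f S).card = S.card := by
    intro S hS
    simp only [SimpleGame.Mset, Finset.mem_filter, Finset.mem_univ, true_and] at hS
    by_cases hiS : i ∈ S
    · simp [hf, hiS]
    · simp only [hf, if_neg hiS]
      rw [Finset.card_insert_of_notMem (fun h => hiS (Finset.mem_of_mem_erase h)),
        Finset.card_erase_of_mem hS.2]
      have : 0 < S.card := Finset.card_pos.mpr ⟨j, hS.2⟩
      omega
  have himg : (v.Mset j).image f ⊆ v.Mset i :=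
    Finset.image_subset_iff.mpr hmem
  constructor
  · calc v.PGI j = ((v.Mset j).image f).card :=
          (Finset.card_image_of_injOn hinj).symm
      _ ≤ v.PGI i := Finset.card_le_card himg
  · have : v.DP j = ∑ S ∈ (v.Mset j).image f, (1 : ℝ) / (S.card : ℝ) := by
      rw [Finset.sum_image (fun x hx y hy h => hinj hx hy h)]
      exact Finset.sum_congr rfl fun S hS => by rw [hcardf S hS]
    rw [this]
    exact Finset.sum_le_sum_of_subset_of_nonneg himg
      (fun S _ _ => by positivity)
end

section
/- For 𝒫 = (Bz^r, S^r) and all n ≥ 2, the cost of local monotonicity on the class 𝔚 of weighted games satisfies c_𝒫(n,𝔚) ≥ max(0, (n−3)/(n−1)). -/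
open scoped Classical

section Aux

open Finset

variable {n : ℕ}

lemma bool_le_true_of {a b : Bool} (h : a ≤ b) (ha : a = true) : b = true := by
  subst ha; cases b
  · exact absurd h (by decide)
  · rfl

lemma key_set (S : Finset (Fin n)) {i j : Fin n} (hij : i ≠ j) :
    (S ∪ {i}) \ {j} = insert i (S.erase j) := by
  rw [Finset.union_comm, ← Finset.insert_eq, ← Finset.erase_eq,
    Finset.erase_insert_of_ne hij]

lemma bz_mono (v : SimpleGame n) {i j : Fin n} (h : v.Dominates i j) :
    v.Bz j ≤ v.Bz i := by
  by_cases hij : i = j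
  · subst hij; exact le_rfl
  apply Finset.card_le_card_of_injOn (fun S => if i ∈ S then S else insert i (S.erase j))
  · intro S hS
    simp only [SimpleGame.Dset, Finset.mem_coe, Finset.mem_filter, Finset.mem_univ, true_and] at hS ⊢
    obtain ⟨hjS, hwin, hlose⟩ := hS
    by_cases hiS : i ∈ S
    · simp only [if_pos hiS]
      refine ⟨hiS, hwin, ?_⟩
      by_contra hc
      have hc' : v.win (S.erase i) = true := by
        cases hw : v.win (S.erase i)
        · exact absurd hw hc
        · rfl
      have hd := h (S.erase i) (Finset.mem_erase.mpr ⟨fun hji => hij hji.symm, hjS⟩)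
        (Finset.notMem_erase i S)
      rw [key_set _ hij, Finset.erase_right_comm, Finset.insert_erase
        (Finset.mem_erase.mpr ⟨hij, hiS⟩), hc', hlose] at hd
      exact absurd hd (by decide)
    · simp only [if_neg hiS]
      have hd := h S hjS hiS
      rw [key_set _ hij] at hd
      exact ⟨Finset.mem_insert_self i _, bool_le_true_of hd hwin, by
        rw [Finset.erase_insert (fun hmem => hiS (Finset.mem_of_mem_erase hmem))]
        exact hlose⟩
  · intro S1 h1 S2 h2 heq
    simp only [SimpleGame.Dset, Finset.mem_filter, Finset.mem_univ, true_and,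
      Finset.coe_filter, Set.mem_setOf_eq] at h1 h2
    have hj1 : j ∈ S1 := h1.1
    have hj2 : j ∈ S2 := h2.1
    by_cases hiS1 : i ∈ S1 <;> by_cases hiS2 : i ∈ S2 <;>
      simp only [if_pos, if_neg, hiS1, hiS2, if_true, if_false] at heq
    · exact heq
    · exfalso
      have : j ∈ insert i (S2.erase j) := heq ▸ hj1
      rcases Finset.mem_insert.mp this with h | h
      · exact hij h.symm
      · exact (Finset.notMem_erase j S2) h
    · exfalso
      have : j ∈ insert i (S1.erase j) := heq ▸ hj2
      rcases Finset.mem_insert.mp this with h | h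
      · exact hij h.symm
      · exact (Finset.notMem_erase j S1) h
    · have h1' : i ∉ S1.erase j := fun hmem => hiS1 (Finset.mem_of_mem_erase hmem)
      have h2' : i ∉ S2.erase j := fun hmem => hiS2 (Finset.mem_of_mem_erase hmem)
      have : S1.erase j = S2.erase j := by
        have := congrArg (fun T => Finset.erase T i) heq
        simpa [Finset.erase_insert h1', Finset.erase_insert h2'] using this
      calc S1 = insert j (S1.erase j) := (Finset.insert_erase hj1).symm
        _ = insert j (S2.erase j) := by rw [this]
        _ = S2 := Finset.insert_erase hj2

/-- The counterexample game `[2; 2,1,…,1]`. -/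
def exGame (n : ℕ) (hn : 0 < n) : SimpleGame n where
  win S := decide ((⟨0, hn⟩ : Fin n) ∈ S ∨ 2 ≤ S.card)
  win_empty := by simp
  win_univ := by simp
  win_mono := by
    intro S T hST h
    simp only [decide_eq_true_eq] at h ⊢
    rcases h with h | h
    · exact Or.inl (hST h)
    · exact Or.inr (le_trans h (Finset.card_le_card hST))

lemma exGame_win {hn : 0 < n} (S : Finset (Fin n)) :
    (exGame n hn).win S = true ↔ ((⟨0, hn⟩ : Fin n) ∈ S ∨ 2 ≤ S.card) := by
  simp [exGame]

lemma exGame_lose {hn : 0 < n} (S : Finset (Fin n)) :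
    (exGame n hn).win S = false ↔ ¬((⟨0, hn⟩ : Fin n) ∈ S ∨ 2 ≤ S.card) := by
  rw [← Bool.not_eq_true, exGame_win]

lemma exGame_weighted (n : ℕ) (hn : 0 < n) : (exGame n hn).IsWeighted := by
  set z : Fin n := ⟨0, hn⟩
  refine ⟨2, fun i => if i = z then 2 else 1, by norm_num, fun i => by
    dsimp only; split <;> norm_num, ?_⟩
  intro S
  have hsum : ∑ i ∈ S, (if i = z then (2:ℝ) else 1)
      = S.card + (if z ∈ S then 1 else 0) := by
    have h1 : ∀ i ∈ S, (if i = z then (2:ℝ) else 1) = 1 + (if i = z then 1 else 0) := by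
      intro i _; split <;> norm_num
    rw [Finset.sum_congr rfl h1, Finset.sum_add_distrib, Finset.sum_const,
      nsmul_eq_mul, mul_one, Finset.sum_ite_eq' S z (fun _ => (1:ℝ))]
  rw [exGame_win, hsum]
  show z ∈ S ∨ 2 ≤ S.card ↔ _
  by_cases hz : z ∈ S
  · have hcard : 1 ≤ S.card := Finset.card_pos.mpr ⟨z, hz⟩
    have : (1:ℝ) ≤ S.card := by exact_mod_cast hcard
    simp only [hz, if_true, true_or, true_iff]
    linarith
  · simp only [hz, if_false, false_or, add_zero]
    exact_mod_cast Iff.rfl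

lemma exGame_dom_z {hn : 0 < n} (j : Fin n) :
    (exGame n hn).Dominates ⟨0, hn⟩ j := by
  intro S hjS hzS
  have hzj : (⟨0, hn⟩ : Fin n) ≠ j := fun h => hzS (h ▸ hjS)
  have : (exGame n hn).win ((S ∪ {⟨0, hn⟩}) \ {j}) = true := by
    rw [exGame_win]
    exact Or.inl (Finset.mem_sdiff.mpr ⟨Finset.mem_union_right _ (Finset.mem_singleton_self _),
      fun h => hzj (Finset.mem_singleton.mp h)⟩)
  rw [this]; exact Bool.le_true _

lemma exGame_dom_any {hn : 0 < n} (j : Fin n) {i : Fin n} (hi : i ≠ ⟨0, hn⟩) :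
    (exGame n hn).Dominates j i := by
  intro S hiS hjS
  have hji : j ≠ i := fun h => hjS (h ▸ hiS)
  rw [key_set _ hji]
  cases hw : (exGame n hn).win S
  · exact Bool.false_le _
  · have hP := (exGame_win S).mp hw
    have : (exGame n hn).win (insert j (S.erase i)) = true := by
      rw [exGame_win]
      rcases hP with hz | hc
      · exact Or.inl (Finset.mem_insert_of_mem (Finset.mem_erase.mpr ⟨fun h => hi h.symm, hz⟩))
      · right
        have hjni : j ∉ S.erase i := fun h => hjS (Finset.mem_of_mem_erase h)
        rw [Finset.card_insert_of_notMem hjni, Finset.card_erase_of_mem hiS]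
        omega
    rw [this]

lemma bz_z_le (hn : 1 < n) :
    (((exGame n (by omega)).Bz ⟨0, by omega⟩ : ℝ)) ≤ n := by
  set hn0 : 0 < n := by omega
  set z : Fin n := ⟨0, hn0⟩ with hzdef
  set v := exGame n hn0
  have hsub : v.Dset z ⊆ insert {z} ((Finset.univ.erase z).image fun k => insert z ({k} : Finset (Fin n))) := by
    intro S hS
    simp only [SimpleGame.Dset, Finset.mem_filter, Finset.mem_univ, true_and] at hS
    obtain ⟨hzS, hwin, hlose⟩ := hS
    have hnotP := (exGame_lose (S.erase z)).mp hlose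
    push_neg at hnotP
    have hec : (S.erase z).card ≤ 1 := by omega
    have hce : (S.erase z).card = S.card - 1 := Finset.card_erase_of_mem hzS
    have hpos : 1 ≤ S.card := Finset.card_pos.mpr ⟨z, hzS⟩
    have : S.card = 1 ∨ S.card = 2 := by omega
    rcases this with h1 | h2
    · obtain ⟨a, ha⟩ := Finset.card_eq_one.mp h1
      have : a = z := by
        have := hzS; rw [ha, Finset.mem_singleton] at this; exact this.symm
      rw [ha, this]
      exact Finset.mem_insert_self _ _
    · have he1 : (S.erase z).card = 1 := by omega
      obtain ⟨k, hk⟩ := Finset.card_eq_one.mp he1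
      have hkz : k ≠ z := by
        have : k ∈ S.erase z := hk ▸ Finset.mem_singleton_self k
        exact (Finset.mem_erase.mp this).1
      have hSk : S = insert z {k} := by
        rw [← hk, Finset.insert_erase hzS]
      rw [hSk]
      exact Finset.mem_insert_of_mem (Finset.mem_image_of_mem _
        (Finset.mem_erase.mpr ⟨hkz, Finset.mem_univ k⟩))
  have h1 := Finset.card_le_card hsub
  have h2 := Finset.card_insert_le ({z} : Finset (Fin n))
    ((Finset.univ.erase z).image fun k => insert z ({k} : Finset (Fin n)))
  have h3 := Finset.card_image_le (f := fun k => insert z ({k} : Finset (Fin n)))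
    (s := Finset.univ.erase z)
  have h4 : (Finset.univ.erase z).card = n - 1 := by
    rw [Finset.card_erase_of_mem (Finset.mem_univ z), Finset.card_univ, Fintype.card_fin]
  have hcard : v.Bz z ≤ n := by
    simp only [SimpleGame.Bz]
    omega
  exact_mod_cast hcard

lemma pair_subset_bz (hn : 1 < n) :
    ((Finset.univ.erase (⟨0, by omega⟩ : Fin n)).erase ⟨1, hn⟩).image
        (fun k => insert (⟨1, hn⟩ : Fin n) ({k} : Finset (Fin n))) ⊆ (exGame n (by omega)).Dset ⟨1, hn⟩ := by
  set hn0 : 0 < n := by omega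
  set z : Fin n := ⟨0, hn0⟩
  set o : Fin n := ⟨1, hn⟩
  intro S hS
  obtain ⟨k, hk, rfl⟩ := Finset.mem_image.mp hS
  have hkz : k ≠ z := (Finset.mem_erase.mp (Finset.mem_of_mem_erase hk)).1
  have hko : k ≠ o := (Finset.mem_erase.mp hk).1
  have hoz : o ≠ z := by simp [o, z, Fin.ext_iff]
  simp only [SimpleGame.Dset, Finset.mem_filter, Finset.mem_univ, true_and]
  refine ⟨Finset.mem_insert_self _ _, ?_, ?_⟩
  · rw [exGame_win]
    right
    rw [Finset.card_insert_of_notMem (by simp [Ne.symm hko]), Finset.card_singleton]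
  · rw [Finset.erase_insert (by simp [Ne.symm hko]), exGame_lose]
    push_neg
    constructor
    · simp [Ne.symm hkz]; exact fun h => hkz h.symm
    · rw [Finset.card_singleton]; omega

lemma pairs_card (hn : 1 < n) :
    (((Finset.univ.erase (⟨0, by omega⟩ : Fin n)).erase ⟨1, hn⟩).image
        (fun k => insert (⟨1, hn⟩ : Fin n) ({k} : Finset (Fin n)))).card = n - 2 := by
  set z : Fin n := ⟨0, by omega⟩
  set o : Fin n := ⟨1, hn⟩
  have hinj : Set.InjOn (fun k => insert o ({k} : Finset (Fin n)))
      ((Finset.univ.erase z).erase o) := by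
    intro k1 hk1 k2 hk2 heq
    have hk1o : k1 ≠ o := (Finset.mem_erase.mp (Finset.mem_coe.mp hk1)).1
    have heq' : insert o ({k1} : Finset (Fin n)) = insert o ({k2} : Finset (Fin n)) := heq
    have : k1 ∈ insert o ({k2} : Finset (Fin n)) := by
      rw [← heq']
      exact Finset.mem_insert_of_mem (Finset.mem_singleton_self k1)
    rcases Finset.mem_insert.mp this with h | h
    · exact absurd h hk1o
    · exact Finset.mem_singleton.mp h
  rw [Finset.card_image_of_injOn hinj,
    Finset.card_erase_of_mem (Finset.mem_erase.mpr ⟨by simp [o, z, Fin.ext_iff], Finset.mem_univ _⟩),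
    Finset.card_erase_of_mem (Finset.mem_univ _), Finset.card_univ, Fintype.card_fin]
  omega

lemma bz_o_ge (hn : 1 < n) :
    ((n : ℝ)) - 2 ≤ ((exGame n (by omega)).Bz ⟨1, hn⟩ : ℝ) := by
  have h := Finset.card_le_card (pair_subset_bz hn)
  rw [pairs_card hn] at h
  have h2 : 2 ≤ n := hn
  have : ((n - 2 : ℕ) : ℝ) ≤ ((exGame n (by omega)).Bz ⟨1, hn⟩ : ℝ) := by exact_mod_cast h
  rw [Nat.cast_sub h2] at this
  exact_mod_cast this

lemma pair_subset_shift (hn : 1 < n) :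
    ((Finset.univ.erase (⟨0, by omega⟩ : Fin n)).erase ⟨1, hn⟩).image
        (fun k => insert (⟨1, hn⟩ : Fin n) ({k} : Finset (Fin n))) ⊆ (exGame n (by omega)).Sset ⟨1, hn⟩ := by
  set hn0 : 0 < n := by omega
  set z : Fin n := ⟨0, hn0⟩
  set o : Fin n := ⟨1, hn⟩
  intro S hS
  obtain ⟨k, hk, rfl⟩ := Finset.mem_image.mp hS
  have hkz : k ≠ z := (Finset.mem_erase.mp (Finset.mem_of_mem_erase hk)).1
  have hko : k ≠ o := (Finset.mem_erase.mp hk).1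
  have hoz : o ≠ z := by simp [o, z, Fin.ext_iff]
  simp only [SimpleGame.Sset, Finset.mem_filter, Finset.mem_univ, true_and]
  have hcard2 : (insert o ({k} : Finset (Fin n))).card = 2 := by
    rw [Finset.card_insert_of_notMem (by simp [Ne.symm hko]), Finset.card_singleton]
  refine ⟨⟨⟨?_, ?_⟩, ?_⟩, Finset.mem_insert_self _ _⟩
  · rw [exGame_win]; right; omega
  · intro T hT
    rw [exGame_lose]
    push_neg
    have hTc : T.card < 2 := hcard2 ▸ Finset.card_lt_card hT
    constructor
    · intro hzT
      have := hT.1 hzT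
      rcases Finset.mem_insert.mp this with h | h
      · exact hoz h.symm
      · exact hkz (Finset.mem_singleton.mp h).symm
    · omega
  · intro i hi j _ _ hndom
    exfalso
    apply hndom
    apply exGame_dom_any
    rcases Finset.mem_insert.mp hi with h | h
    · rw [h]; exact hoz
    · rw [Finset.mem_singleton.mp h]; exact hkz

lemma shift_o_ge (hn : 1 < n) :
    ((n : ℝ)) - 2 ≤ ((exGame n (by omega)).ShiftIdx ⟨1, hn⟩ : ℝ) := by
  have h := Finset.card_le_card (pair_subset_shift hn)
  rw [pairs_card hn] at h
  have h2 : 2 ≤ n := hn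
  have : ((n - 2 : ℕ) : ℝ) ≤ ((exGame n (by omega)).ShiftIdx ⟨1, hn⟩ : ℝ) := by exact_mod_cast h
  rw [Nat.cast_sub h2] at this
  exact_mod_cast this

lemma shift_z_le (hn : 1 < n) :
    (((exGame n (by omega)).ShiftIdx ⟨0, by omega⟩ : ℝ)) ≤ 1 := by
  set hn0 : 0 < n := by omega
  set z : Fin n := ⟨0, hn0⟩
  set v := exGame n hn0
  have hsub : v.Sset z ⊆ {({z} : Finset (Fin n))} := by
    intro S hS
    simp only [SimpleGame.Sset, Finset.mem_filter, Finset.mem_univ, true_and] at hS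
    obtain ⟨⟨⟨hwin, hmin⟩, _⟩, hzS⟩ := hS
    have hzwin : v.win {z} = true := by
      rw [exGame_win]; exact Or.inl (Finset.mem_singleton_self z)
    rw [Finset.mem_singleton]
    by_contra hne
    have : ({z} : Finset (Fin n)) ⊂ S :=
      Finset.ssubset_iff_subset_ne.mpr ⟨Finset.singleton_subset_iff.mpr hzS, fun h => hne h.symm⟩
    rw [hmin _ this] at hzwin
    exact absurd hzwin (by decide)
  have : v.ShiftIdx z ≤ 1 := by
    calc v.ShiftIdx z ≤ ({({z} : Finset (Fin n))} : Finset _).card := Finset.card_le_card hsub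
      _ = 1 := Finset.card_singleton _
  exact_mod_cast this

end Aux

/-- for `𝒫 = (Bz^r, S^r)` and `n ≥ 2`, the cost of local
monotonicity on weighted games is at least `max(0, (n-3)/(n-1))`. -/
theorem costLM_Bz_Shift_lower_bound (n : ℕ) (hn : 2 ≤ n) :
    max 0 (((n : ℝ) - 3) / ((n : ℝ) - 1)) ≤ costLM ![BzPI, ShiftPI] n WeightedClass := by
  have hn1 : 1 < n := hn
  have hn0 : 0 < n := by omega
  have hnR : (2 : ℝ) ≤ n := by exact_mod_cast hn
  have hden : (0 : ℝ) < (n : ℝ) - 1 := by linarith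
  rw [costLM]
  apply le_csInf
  · refine ⟨1, ⟨zero_le_one, le_rfl⟩, ?_⟩
    intro α hα h1 v _ i j hdom
    have hsum : α 0 + α 1 = 1 := by
      have := hα.2
      rwa [Fin.sum_univ_two] at this
    have h0 : α 0 = 1 := le_antisymm (by have := hα.1 1; linarith) h1
    have h1' : α 1 = 0 := by linarith
    simp only [convexComb, Fin.sum_univ_two, Matrix.cons_val_zero, Matrix.cons_val_one,
      Matrix.head_cons, h0, h1', one_mul, zero_mul, add_zero, BzPI]
    exact_mod_cast bz_mono v hdom
  · rintro b ⟨⟨hb0, hb1⟩, hLM⟩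
    apply max_le hb0
    by_cases h4 : (4 : ℕ) ≤ n
    · have h4R : (4 : ℝ) ≤ n := by exact_mod_cast h4
      set z : Fin n := ⟨0, hn0⟩
      set o : Fin n := ⟨1, hn1⟩
      set v := exGame n hn0 with hv
      have hvW : v ∈ WeightedClass n := exGame_weighted n hn0
      have hα : ![b, 1 - b] ∈ stdSimplex ℝ (Fin 2) := by
        constructor
        · intro i
          fin_cases i
          · show (0:ℝ) ≤ b
            exact hb0
          · show (0:ℝ) ≤ 1 - b
            linarith
        · rw [Fin.sum_univ_two]
          simp only [Matrix.cons_val_zero, Matrix.cons_val_one, Matrix.head_cons]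
          ring
      have hq := hLM ![b, 1 - b] hα (by simp) v hvW z o (exGame_dom_z o)
      simp only [convexComb, Fin.sum_univ_two, Matrix.cons_val_zero, Matrix.cons_val_one,
        Matrix.head_cons, BzPI, ShiftPI] at hq
      have hBz : ((v.Bz z : ℝ)) ≤ n := bz_z_le hn1
      have hBo : ((n : ℝ)) - 2 ≤ (v.Bz o : ℝ) := bz_o_ge hn1
      have hSz : ((v.ShiftIdx z : ℝ)) ≤ 1 := shift_z_le hn1
      have hSo : ((n : ℝ)) - 2 ≤ (v.ShiftIdx o : ℝ) := shift_o_ge hn1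
      rw [div_le_iff₀ hden]
      nlinarith [mul_le_mul_of_nonneg_left hBo hb0, mul_le_mul_of_nonneg_left hBz hb0,
        mul_le_mul_of_nonneg_left hSo (by linarith : (0:ℝ) ≤ 1 - b),
        mul_le_mul_of_nonneg_left hSz (by linarith : (0:ℝ) ≤ 1 - b)]
    · have h3 : (n : ℝ) ≤ 3 := by
        have : n ≤ 3 := by omega
        exact_mod_cast this
      have : ((n : ℝ) - 3) / ((n : ℝ) - 1) ≤ 0 :=
        div_nonpos_of_nonpos_of_nonneg (by linarith) (by linarith)
      linarith
end
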